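/- arXiv:1308.5444 — 3 statements merged into one kernel-verified Lean document; each statement's English description precedes it below -/
import Mathlib

section
/- Let S be a finite set, and for each i ∈ S let B_i > 0, b_i > 0, x_i ≥ 0 and y_i be real numbers, and set y_i' = y_i + b_i x_i. Let g : ℝ → ℝ be nondecreasing and integrable on every interval [y_i/B_i, y_i'/B_i], let b > 0 and Ȳ ∈ ℝ, and suppose that b_i (g(y_i'/B_i) - 1) ≤ b (g(Ȳ) - 1) for every i ∈ S. Then ∑_{i∈S} b_i x_i - ∑_{i∈S} B_i ∫_{y_i/B_i}^{y_i'/B_i} g(u) du ≥ b (1 - g(Ȳ)) · ∑_{i∈S} x_i. -/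
/-- For a monotone function, the interval integral from `a` to `c` with `a ≤ c`
is at most `(c - a) * g c`. -/
lemma int_le_right {g : ℝ → ℝ} (hg : Monotone g) {a c : ℝ} (hac : a ≤ c)
    (hint : IntervalIntegrable g MeasureTheory.volume a c) :
    (∫ u in a..c, g u) ≤ (c - a) * g c := by
  have h : (∫ u in a..c, g u) ≤ ∫ _ in a..c, g c := by
    apply intervalIntegral.integral_mono_on hac hint (intervalIntegrable_const)
    intro u hu
    exact hg hu.2
  simpa using h

/-- Monotonicity-property inequality for virtual water-filling (OnBAP):
with budgets `B i > 0`, bids `b i > 0`, allocations `x i ≥ 0`, old levels `y i`,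
new levels `y i + b i * x i`, a nondecreasing `g` integrable on the relevant
normalized intervals, and the virtual water-level condition
`b i (g((y i + b i x i)/B i) - 1) ≤ bb (g Ȳ - 1)` for all `i ∈ S`, one has
`∑ b i x i - ∑ B i ∫ g ≥ bb (1 - g Ȳ) ∑ x i`. -/
theorem stmt3 {ι : Type*} (S : Finset ι) (B b x y : ι → ℝ) (g : ℝ → ℝ) (bb Ybar : ℝ)
    (hB : ∀ i ∈ S, 0 < B i) (hb : ∀ i ∈ S, 0 < b i) (hx : ∀ i ∈ S, 0 ≤ x i)
    (hg : Monotone g)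
    (hint : ∀ i ∈ S,
      IntervalIntegrable g MeasureTheory.volume (y i / B i) ((y i + b i * x i) / B i))
    (hbb : 0 < bb)
    (hvirt : ∀ i ∈ S, b i * (g ((y i + b i * x i) / B i) - 1) ≤ bb * (g Ybar - 1)) :
    (∑ i ∈ S, b i * x i) -
        (∑ i ∈ S, B i * ∫ u in (y i / B i)..((y i + b i * x i) / B i), g u) ≥
      bb * (1 - g Ybar) * ∑ i ∈ S, x i := by
  rw [← Finset.sum_sub_distrib, Finset.mul_sum, ge_iff_le]
  apply Finset.sum_le_sum
  intro i hi
  have hBi := hB i hi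
  have hbi := hb i hi
  have hxi := hx i hi
  set a := y i / B i
  set c := (y i + b i * x i) / B i with hc
  have hac : a ≤ c := by
    apply div_le_div_of_nonneg_right ?_ hBi.le
    nlinarith
  have hlen : c - a = b i * x i / B i := by
    simp only [hc, a]
    field_simp
    ring
  have hI : B i * (∫ u in a..c, g u) ≤ b i * x i * g c := by
    have := int_le_right hg hac (hint i hi)
    calc B i * (∫ u in a..c, g u) ≤ B i * ((c - a) * g c) := by
          apply mul_le_mul_of_nonneg_left this hBi.le
      _ = b i * x i * g c := by rw [hlen]; field_simp
  have hv := hvirt i hi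
  -- goal: bb * (1 - g Ybar) * x i ≤ b i * x i - B i * ∫ …
  have key : b i * x i - b i * x i * g c ≥ bb * (1 - g Ybar) * x i := by
    nlinarith [mul_le_mul_of_nonneg_right hv hxi]
  linarith
end

section
/- Let r ∈ ℕ, let 0 = θ_0 ≤ θ_1 ≤ … ≤ θ_r ≤ 1 and 0 ≤ Z_1 ≤ … ≤ Z_r ≤ Z_{r+1} = 1 be real numbers, and let g(x) = e^{x-1}. Define the step function Z^c : [0, θ_r) → ℝ by Z^c(y) = Z_k for y ∈ [θ_{k-1}, θ_k), 1 ≤ k ≤ r. Then (∫_0^1 g(z) dz - ∑_{k=1}^{r} θ_k ∫_{Z_k}^{Z_{k+1}} g(z) dz) + ∫_0^{θ_r} (1 - g(Z^c(y))) dy = 1 - 1/e. -/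
open MeasureTheory intervalIntegral

lemma exp_shift_integral (a b : ℝ) :
    (∫ z in a..b, Real.exp (z - 1)) = Real.exp (b - 1) - Real.exp (a - 1) := by
  rw [intervalIntegral.integral_comp_sub_right (fun z => Real.exp z) 1, integral_exp]

/-- Telescoping identity with `g x = e^{x-1}`: with step levels
`0 = θ 0 ≤ … ≤ θ r ≤ 1`, values `0 ≤ Z 1 ≤ … ≤ Z r ≤ Z (r+1) = 1`, and the step
function `Zc` equal to `Z k` on `[θ (k-1), θ k)`, one has
`(∫_0^1 g - ∑_{k=1}^r θ k ∫_{Z k}^{Z (k+1)} g) + ∫_0^{θ r} (1 - g (Zc y)) dy = 1 - 1/e`. -/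
theorem stmt6 (r : ℕ) (θ Z : ℕ → ℝ) (Zc : ℝ → ℝ)
    (hθ0 : θ 0 = 0) (hθmono : ∀ k, k < r → θ k ≤ θ (k + 1)) (hθr : θ r ≤ 1)
    (hZ1 : 0 ≤ Z 1) (hZmono : ∀ k, 1 ≤ k → k ≤ r → Z k ≤ Z (k + 1)) (hZr1 : Z (r + 1) = 1)
    (hZc : ∀ k, 1 ≤ k → k ≤ r → ∀ y ∈ Set.Ico (θ (k - 1)) (θ k), Zc y = Z k) :
    ((∫ z in (0:ℝ)..1, Real.exp (z - 1)) -
        ∑ k ∈ Finset.Icc 1 r, θ k * ∫ z in (Z k)..(Z (k + 1)), Real.exp (z - 1)) +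
      (∫ y in (0:ℝ)..(θ r), (1 - Real.exp (Zc y - 1))) = 1 - 1 / Real.exp 1 := by
  set f : ℝ → ℝ := fun y => 1 - Real.exp (Zc y - 1) with hf
  set E : ℕ → ℝ := fun k => Real.exp (Z k - 1) with hE
  -- a.e. key fact on each step interval
  have key : ∀ i, i < r → ∀ᵐ y : ℝ, y ∈ Set.uIoc (θ i) (θ (i + 1)) →
      f y = 1 - E (i + 1) := by
    intro i hi
    have hne : ∀ᵐ y : ℝ, y ≠ θ (i + 1) := by
      refine (MeasureTheory.ae_iff).mpr ?_
      simp [Real.volume_singleton]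
    filter_upwards [hne] with y hy hmem
    rw [Set.uIoc_of_le (hθmono i hi)] at hmem
    have hmem' : y ∈ Set.Ico (θ ((i + 1) - 1)) (θ (i + 1)) := by
      simpa using Set.mem_Ico.mpr ⟨le_of_lt hmem.1, lt_of_le_of_ne hmem.2 hy⟩
    rw [hf, hE]
    simp only
    rw [hZc (i + 1) (Nat.le_add_left 1 i) (Nat.succ_le_of_lt hi) y hmem']
  have hint : ∀ i, i < r → IntervalIntegrable f volume (θ i) (θ (i + 1)) := by
    intro i hi
    have hc : IntervalIntegrable (fun _ : ℝ => 1 - E (i + 1)) volume (θ i) (θ (i + 1)) :=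
      intervalIntegrable_const
    rw [intervalIntegrable_iff] at hc ⊢
    have heq : f =ᵐ[volume.restrict (Set.uIoc (θ i) (θ (i + 1)))]
        (fun _ => 1 - E (i + 1)) := (ae_restrict_iff' measurableSet_uIoc).mpr (key i hi)
    exact hc.congr heq.symm
  have hval : ∀ i, i < r → (∫ y in (θ i)..(θ (i + 1)), f y)
      = (θ (i + 1) - θ i) * (1 - E (i + 1)) := by
    intro i hi
    rw [intervalIntegral.integral_congr_ae (key i hi), intervalIntegral.integral_const,
      smul_eq_mul]
  -- decompose the step integral
  have hsplit : (∫ y in (0:ℝ)..(θ r), f y)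
      = ∑ i ∈ Finset.range r, (θ (i + 1) - θ i) * (1 - E (i + 1)) := by
    have := intervalIntegral.sum_integral_adjacent_intervals (μ := volume) (a := θ)
      (n := r) (fun i hi => hint i hi)
    rw [hθ0] at this
    rw [← this]
    exact (Finset.sum_congr rfl fun i hi => hval i (Finset.mem_range.mp hi))
  rw [show (∫ y in (0:ℝ)..(θ r), (1 - Real.exp (Zc y - 1))) = ∫ y in (0:ℝ)..(θ r), f y from rfl,
    hsplit, exp_shift_integral]
  have hsum : ∑ k ∈ Finset.Icc 1 r, θ k * ∫ z in (Z k)..(Z (k + 1)), Real.exp (z - 1)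
      = ∑ i ∈ Finset.range r, θ (i + 1) * (E (i + 2) - E (i + 1)) := by
    rw [← Finset.Ico_add_one_right_eq_Icc, Finset.sum_Ico_eq_sum_range]
    refine Finset.sum_congr (by simp) fun i hi => ?_
    rw [exp_shift_integral]
    simp only [hE]
    rw [show 1 + i = i + 1 by omega, show i + 1 + 1 = i + 2 by omega]
  rw [hsum]
  have htel : ∑ i ∈ Finset.range r,
      ((θ (i + 1) - θ i) * (1 - E (i + 1)) - θ (i + 1) * (E (i + 2) - E (i + 1)))
      = θ r * (1 - E (r + 1)) - θ 0 * (1 - E 1) := by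
    rw [← Finset.sum_range_sub (fun i => θ i * (1 - E (i + 1))) r]
    exact Finset.sum_congr rfl fun i _ => by ring
  have hE1 : E (r + 1) = 1 := by simp [hE, hZr1]
  rw [hE1, hθ0] at htel
  simp only [sub_self, mul_zero, zero_mul, sub_zero] at htel
  have : ∑ i ∈ Finset.range r, (θ (i + 1) - θ i) * (1 - E (i + 1))
      = ∑ i ∈ Finset.range r, θ (i + 1) * (E (i + 2) - E (i + 1)) := by
    have := htel
    rw [Finset.sum_sub_distrib] at this
    linarith
  rw [this, show (0:ℝ) - 1 = -1 by ring, show (1:ℝ) - 1 = 0 by ring, Real.exp_zero,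
    Real.exp_neg]
  ring
end

section
/- Let k ≥ 1 be a natural number, let c_0, …, c_{k-1} be nonnegative real numbers with ∑_{t=0}^{k-1} c_t ≤ 1, and let α ≥ 0 be a real number such that α ≤ ∑_{t=0}^{s} c_t · 2^{t-s} for every s ∈ {0, 1, …, k-1}. Then α ≤ 2/k. In particular, there exists s ∈ {0, …, k-1} with ∑_{t=0}^{s} c_t · 2^{t-s} ≤ 2/k. -/
lemma double_sum_le (k : ℕ) (c : ℕ → ℝ) (hc : ∀ t, 0 ≤ c t)
    (hsum : ∑ t ∈ Finset.range k, c t ≤ 1) :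
    ∑ s ∈ Finset.range k, ∑ t ∈ Finset.range (s + 1),
      c t * 2 ^ ((t : ℤ) - (s : ℤ)) ≤ 2 := by
  have hswap : ∑ s ∈ Finset.range k, ∑ t ∈ Finset.range (s + 1),
      c t * 2 ^ ((t : ℤ) - (s : ℤ))
      = ∑ t ∈ Finset.range k, ∑ s ∈ Finset.Ico t k,
        c t * 2 ^ ((t : ℤ) - (s : ℤ)) := by
    rw [Finset.sum_sigma', Finset.sum_sigma']
    apply Finset.sum_nbij' (fun p => ⟨p.2, p.1⟩) (fun p => ⟨p.2, p.1⟩) <;>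
      simp_all [Finset.mem_sigma, Finset.mem_range, Finset.mem_Ico] <;> omega
  rw [hswap]
  calc ∑ t ∈ Finset.range k, ∑ s ∈ Finset.Ico t k, c t * 2 ^ ((t : ℤ) - (s : ℤ))
      ≤ ∑ t ∈ Finset.range k, c t * 2 := by
        apply Finset.sum_le_sum
        intro t _
        rw [← Finset.mul_sum]
        apply mul_le_mul_of_nonneg_left _ (hc t)
        rw [Finset.sum_Ico_eq_sum_range]
        have : ∀ j ∈ Finset.range (k - t),
            (2:ℝ) ^ ((t : ℤ) - ((t + j : ℕ) : ℤ)) = (1/2 : ℝ) ^ j := by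
          intro j _
          push_cast
          rw [show (t : ℤ) - (t + j) = -j by ring, zpow_neg, zpow_natCast]
          simp
        rw [Finset.sum_congr rfl this]
        exact sum_geometric_two_le _
    _ ≤ 1 * 2 := by
        rw [← Finset.sum_mul]
        exact mul_le_mul_of_nonneg_right hsum (by norm_num)
    _ = 2 := by norm_num

/-- Factor-revealing LP bound: if `c t ≥ 0`, `∑_{t<k} c t ≤ 1`, `α ≥ 0` and
`α ≤ ∑_{t=0}^s c t · 2^{t-s}` for every `s < k`, then `α ≤ 2/k`; in particular
some `s < k` has `∑_{t=0}^s c t · 2^{t-s} ≤ 2/k`. -/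
theorem stmt9 (k : ℕ) (hk : 1 ≤ k) (c : ℕ → ℝ) (hc : ∀ t, 0 ≤ c t)
    (hsum : ∑ t ∈ Finset.range k, c t ≤ 1) (α : ℝ) (hα0 : 0 ≤ α)
    (hα : ∀ s, s < k → α ≤ ∑ t ∈ Finset.range (s + 1), c t * 2 ^ ((t : ℤ) - (s : ℤ))) :
    α ≤ 2 / k ∧
      ∃ s, s < k ∧ (∑ t ∈ Finset.range (s + 1), c t * 2 ^ ((t : ℤ) - (s : ℤ))) ≤ 2 / k := by
  have hkpos : (0:ℝ) < k := by exact_mod_cast hk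
  have key : ∃ s, s < k ∧
      (∑ t ∈ Finset.range (s + 1), c t * 2 ^ ((t : ℤ) - (s : ℤ))) ≤ 2 / k := by
    by_contra h
    push_neg at h
    have hlt : (2:ℝ) < ∑ s ∈ Finset.range k, ∑ t ∈ Finset.range (s + 1),
        c t * 2 ^ ((t : ℤ) - (s : ℤ)) := by
      calc (2:ℝ) = ∑ _s ∈ Finset.range k, (2:ℝ) / (k:ℝ) := by
            rw [Finset.sum_const, Finset.card_range, nsmul_eq_mul]
            field_simp
        _ < _ := by
            apply Finset.sum_lt_sum_of_nonempty
            · exact Finset.nonempty_range_iff.mpr (by omega)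
            · intro s hs
              exact h s (Finset.mem_range.mp hs)
    exact absurd (double_sum_le k c hc hsum) (not_le.mpr hlt)
  obtain ⟨s, hs, hle⟩ := key
  exact ⟨le_trans (hα s hs) hle, s, hs, hle⟩
end
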